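/- Let A : ℝ → ℝ be L-Lipschitz and define γ : ℝ → ℍ by γ(y) = (A(y), y, ∫₀^y A(r) dr − ½ y A(y)). Then for all y, y' ∈ ℝ, γ(y')⁻¹·γ(y) = (A(y) − A(y'), y − y', ∫_y^{y'} (A(y) + A(y') − 2A(r))/2 dr), and consequently the map Γ : ℝ² → ℍ, Γ(y,t) := γ(y)·(0,0,t), is bilipschitz with constant comparable to 1 + L: there is an absolute constant C so that C⁻¹(1+L)⁻¹ d_π((y,t),(y',t')) ≤ d(Γ(y,t), Γ(y',t')) ≤ C(1+L) d_π((y,t),(y',t')), where d_π((y,t),(y',t')) = |y − y'| + |t − t'|^{1/2}. -/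
import Mathlib

/-- Heisenberg group product on `ℝ³`. -/
noncomputable def Hmul (p q : ℝ × ℝ × ℝ) : ℝ × ℝ × ℝ :=
  (p.1 + q.1, p.2.1 + q.2.1, p.2.2 + q.2.2 + (p.1 * q.2.1 - q.1 * p.2.1) / 2)

/-- Heisenberg group inverse. -/
def Hinv (p : ℝ × ℝ × ℝ) : ℝ × ℝ × ℝ := (-p.1, -p.2.1, -p.2.2)

/-- The max-norm `‖(x,y,t)‖ = max (√(x²+y²)) (√|t|)`. -/
noncomputable def Hnorm (p : ℝ × ℝ × ℝ) : ℝ :=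
  max (Real.sqrt (p.1 ^ 2 + p.2.1 ^ 2)) (Real.sqrt |p.2.2|)

/-- The left-invariant Heisenberg distance `d(p,q) = ‖q⁻¹ · p‖`. -/
noncomputable def Hdist (p q : ℝ × ℝ × ℝ) : ℝ := Hnorm (Hmul (Hinv q) p)

/-- The horizontal lift `γ(y) = (A(y), y, ∫₀^y A − ½ y A(y))` of a Lipschitz
function `A`. -/
noncomputable def gammaA (A : ℝ → ℝ) (y : ℝ) : ℝ × ℝ × ℝ :=
  (A y, y, (∫ r in (0 : ℝ)..y, A r) - y * A y / 2)

/-- The flag parametrisation `Γ(y,t) = γ(y) · (0,0,t)`. -/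
noncomputable def GammaA (A : ℝ → ℝ) (p : ℝ × ℝ) : ℝ × ℝ × ℝ :=
  Hmul (gammaA A p.1) (0, 0, p.2)

lemma sqrt_add_le' {a b : ℝ} (ha : 0 ≤ a) (hb : 0 ≤ b) :
    Real.sqrt (a + b) ≤ Real.sqrt a + Real.sqrt b := by
  have h1 : a + b ≤ (Real.sqrt a + Real.sqrt b) ^ 2 := by
    have := Real.sq_sqrt ha
    have := Real.sq_sqrt hb
    have := Real.sqrt_nonneg a
    have := Real.sqrt_nonneg b
    nlinarith
  calc Real.sqrt (a + b) ≤ Real.sqrt ((Real.sqrt a + Real.sqrt b) ^ 2) :=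
        Real.sqrt_le_sqrt h1
    _ = Real.sqrt a + Real.sqrt b := Real.sqrt_sq (by positivity)

lemma mem_bound' {x y y' : ℝ} (h1 : min y y' ≤ x) (h2 : x ≤ max y y') :
    |x - y| ≤ |y - y'| ∧ |x - y'| ≤ |y - y'| := by
  rcases le_total y y' with h | h
  · rw [min_eq_left h] at h1; rw [max_eq_right h] at h2
    rw [abs_of_nonpos (by linarith : y - y' ≤ 0)]
    constructor <;> rw [abs_le] <;> constructor <;> linarith
  · rw [min_eq_right h] at h1; rw [max_eq_left h] at h2
    rw [abs_of_nonneg (by linarith : 0 ≤ y - y')]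
    constructor <;> rw [abs_le] <;> constructor <;> linarith

theorem stmt19 (L : ℝ) (hL : 0 < L) (A : ℝ → ℝ)
    (hA : ∀ x y : ℝ, |A x - A y| ≤ L * |x - y|) :
    (∀ y y' : ℝ,
      Hmul (Hinv (gammaA A y')) (gammaA A y) =
        (A y - A y', y - y', ∫ r in y..y', (A y + A y' - 2 * A r) / 2)) ∧
    ∃ C : ℝ, 0 < C ∧ ∀ y t y' t' : ℝ,
      C⁻¹ * (1 + L)⁻¹ * (|y - y'| + Real.sqrt |t - t'|) ≤
        Hdist (GammaA A (y, t)) (GammaA A (y', t')) ∧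
      Hdist (GammaA A (y, t)) (GammaA A (y', t')) ≤
        C * (1 + L) * (|y - y'| + Real.sqrt |t - t'|) := by
  have hcont : Continuous A := by
    rw [Metric.continuous_iff]
    intro b ε hε
    exact ⟨ε / L, by positivity, fun a ha => by
      have := hA a b
      have : dist (A a) (A b) ≤ L * dist a b := by
        simpa [Real.dist_eq] using hA a b
      calc dist (A a) (A b) ≤ L * dist a b := this
        _ < L * (ε / L) := by exact mul_lt_mul_of_pos_left ha hL
        _ = ε := by field_simp⟩
  have hint : ∀ a b : ℝ, IntervalIntegrable A MeasureTheory.volume a b :=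
    fun a b => hcont.intervalIntegrable a b
  -- the integral identity
  have hI : ∀ y y' : ℝ, (∫ r in y..y', (A y + A y' - 2 * A r) / 2) =
      (∫ r in (0:ℝ)..y, A r) - (∫ r in (0:ℝ)..y', A r)
        + (y' - y) * (A y + A y') / 2 := by
    intro y y'
    have heq : ∀ r : ℝ, (A y + A y' - 2 * A r) / 2 = (A y + A y') / 2 - A r :=
      fun r => by ring
    simp_rw [heq]
    rw [intervalIntegral.integral_sub intervalIntegrable_const (hint y y'),
      intervalIntegral.integral_const]
    have h2 : (∫ r in y..y', A r) = (∫ r in (0:ℝ)..y', A r) - ∫ r in (0:ℝ)..y, A r :=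
      (intervalIntegral.integral_interval_sub_left (hint 0 y') (hint 0 y)).symm
    rw [h2, smul_eq_mul]
    ring
  have key : ∀ y y' : ℝ,
      Hmul (Hinv (gammaA A y')) (gammaA A y) =
        (A y - A y', y - y', ∫ r in y..y', (A y + A y' - 2 * A r) / 2) := by
    intro y y'
    simp only [Hmul, Hinv, gammaA, Prod.mk.injEq]
    refine ⟨by ring, by ring, ?_⟩
    rw [hI y y']; ring
  refine ⟨key, 3, by norm_num, ?_⟩
  intro y t y' t'
  have h1L : (0:ℝ) < 1 + L := by linarith
  set a := |y - y'| with ha_def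
  set s := Real.sqrt |t - t'| with hs_def
  set I := ∫ r in y..y', (A y + A y' - 2 * A r) / 2 with hI_def
  -- explicit form of the difference
  have hG : Hmul (Hinv (GammaA A (y', t'))) (GammaA A (y, t)) =
      (A y - A y', y - y', (t - t') + I) := by
    simp only [GammaA, Hmul, Hinv, gammaA, Prod.mk.injEq]
    refine ⟨by ring, by ring, ?_⟩
    rw [hI_def, hI y y']; ring
  have hD : Hdist (GammaA A (y, t)) (GammaA A (y', t')) =
      max (Real.sqrt ((A y - A y') ^ 2 + (y - y') ^ 2))
        (Real.sqrt |t - t' + I|) := by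
    rw [Hdist, hG]; rfl
  -- bound on |I|
  have hIb : |I| ≤ L * a ^ 2 := by
    have hbound : ∀ x ∈ Set.uIoc y y', ‖(A y + A y' - 2 * A x) / 2‖ ≤ L * a := by
      intro x hx
      obtain ⟨hx1, hx2⟩ := hx
      obtain ⟨hb1, hb2⟩ := mem_bound' (le_of_lt hx1) hx2
      have hb1' : |y - x| ≤ a := by rw [abs_sub_comm]; exact hb1
      have hb2' : |y' - x| ≤ a := by rw [abs_sub_comm]; exact hb2
      have e1 : |A y - A x| ≤ L * a :=
        le_trans (hA y x) (mul_le_mul_of_nonneg_left hb1' hL.le)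
      have e2 : |A y' - A x| ≤ L * a :=
        le_trans (hA y' x) (mul_le_mul_of_nonneg_left hb2' hL.le)
      have : |A y + A y' - 2 * A x| ≤ |A y - A x| + |A y' - A x| := by
        have := abs_add_le (A y - A x) (A y' - A x)
        have heq : A y + A y' - 2 * A x = (A y - A x) + (A y' - A x) := by ring
        rw [heq]; exact this
      rw [Real.norm_eq_abs, abs_div]
      rw [show |(2:ℝ)| = 2 by norm_num]
      linarith
    have := intervalIntegral.norm_integral_le_of_norm_le_const hbound
    rw [Real.norm_eq_abs] at this
    calc |I| ≤ L * a * |y' - y| := this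
      _ = L * a ^ 2 := by rw [abs_sub_comm y' y, ← ha_def]; ring
  have hAb : |A y - A y'| ≤ L * a := hA y y'
  have ha0 : 0 ≤ a := abs_nonneg _
  have hs0 : 0 ≤ s := Real.sqrt_nonneg _
  set X := Real.sqrt ((A y - A y') ^ 2 + (y - y') ^ 2) with hX_def
  set Y := Real.sqrt |t - t' + I| with hY_def
  have hsqL : Real.sqrt L ≤ 1 + L := by
    calc Real.sqrt L ≤ Real.sqrt ((1 + L) ^ 2) := Real.sqrt_le_sqrt (by nlinarith)
      _ = 1 + L := Real.sqrt_sq h1L.le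
  have hsqL0 : 0 ≤ Real.sqrt L := Real.sqrt_nonneg _
  have hsqLa : Real.sqrt (L * a ^ 2) = Real.sqrt L * a := by
    rw [Real.sqrt_mul hL.le, Real.sqrt_sq_eq_abs, abs_of_nonneg ha0]
  -- bounds on X
  have haX : a ≤ X := by
    have h := Real.sqrt_le_sqrt (show (y - y') ^ 2 ≤ (A y - A y') ^ 2 + (y - y') ^ 2 by
      nlinarith [sq_nonneg (A y - A y')])
    rwa [Real.sqrt_sq_eq_abs, ← ha_def] at h
  have hXa : X ≤ (1 + L) * a := by
    calc X ≤ Real.sqrt ((1 + L) ^ 2 * a ^ 2) := by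
          apply Real.sqrt_le_sqrt
          have h2 : (y - y') ^ 2 = a ^ 2 := by rw [ha_def, sq_abs]
          have hsq : (A y - A y') ^ 2 ≤ (L * a) ^ 2 := by
            have h3 := mul_self_le_mul_self (abs_nonneg (A y - A y')) hAb
            calc (A y - A y') ^ 2 = |A y - A y'| * |A y - A y'| := by
                  rw [abs_mul_abs_self]; ring
              _ ≤ (L * a) * (L * a) := h3
              _ = (L * a) ^ 2 := by ring
          nlinarith [hsq, h2, ha0, hL.le]
      _ = (1 + L) * a := by
          rw [Real.sqrt_mul (by positivity), Real.sqrt_sq h1L.le,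
            Real.sqrt_sq_eq_abs, abs_of_nonneg ha0]
  -- bounds on Y
  have hYb : Y ≤ s + Real.sqrt L * a := by
    calc Y ≤ Real.sqrt (|t - t'| + L * a ^ 2) := by
          apply Real.sqrt_le_sqrt
          calc |t - t' + I| ≤ |t - t'| + |I| := abs_add_le _ _
            _ ≤ |t - t'| + L * a ^ 2 := by linarith
      _ ≤ s + Real.sqrt (L * a ^ 2) :=
          sqrt_add_le' (abs_nonneg _) (by positivity)
      _ = s + Real.sqrt L * a := by rw [hsqLa]
  have hsY : s ≤ Y + Real.sqrt L * a := by
    calc s ≤ Real.sqrt (|t - t' + I| + L * a ^ 2) := by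
          apply Real.sqrt_le_sqrt
          have : |t - t'| ≤ |t - t' + I| + |I| := by
            have := abs_sub (t - t' + I) I
            calc |t - t'| = |(t - t' + I) - I| := by ring_nf
              _ ≤ |t - t' + I| + |I| := abs_sub _ _
          linarith
      _ ≤ Y + Real.sqrt (L * a ^ 2) := sqrt_add_le' (abs_nonneg _) (by positivity)
      _ = Y + Real.sqrt L * a := by rw [hsqLa]
  set N := max X Y with hN_def
  have hXN : X ≤ N := le_max_left _ _
  have hYN : Y ≤ N := le_max_right _ _
  have hN0 : 0 ≤ N := le_trans (le_trans ha0 haX) hXN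
  rw [hD]
  constructor
  · -- lower bound
    have hmain : a + s ≤ 3 * (1 + L) * N := by
      have h1 : a ≤ N := le_trans haX hXN
      have h2 : s ≤ N + Real.sqrt L * a := le_trans hsY (by linarith)
      nlinarith
    calc (3:ℝ)⁻¹ * (1 + L)⁻¹ * (a + s)
        ≤ (3:ℝ)⁻¹ * (1 + L)⁻¹ * (3 * (1 + L) * N) := by
          apply mul_le_mul_of_nonneg_left hmain (by positivity)
      _ = N := by field_simp
  · -- upper bound
    apply max_le
    · nlinarith
    · nlinarith
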